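/- There is an absolute constant C > 0 such that for every prime p and every real α with 2/3 < α ≤ 1, there exists a set S ⊆ 𝔽_p with |S| = ⌊αp⌋ and Λ(S) ≤ α³·(1 − (1−α)²/2) + C/p. -/

import Mathlib

noncomputable def Lam (p : ℕ) [NeZero p] (f : ZMod p → ℝ) : ℝ :=
  ((p : ℝ) ^ 2)⁻¹ * ∑ n : ZMod p, ∑ d : ZMod p, f n * f (n + d) * f (n + 2 * d)

noncomputable def ind (p : ℕ) [NeZero p] (S : Finset (ZMod p)) : ZMod p → ℝ :=
  fun n => if n ∈ S then 1 else 0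

open Finset

-- Gauss sum 1 : sum of (c - t) over c < m
lemma gauss1 (t : ℕ) : ∀ m : ℕ, 2 * ∑ c ∈ range m, (c - t) = (m - t) * (m - t - 1) := by
  intro m
  induction m with
  | zero => simp
  | succ m ih =>
    rw [sum_range_succ, Nat.mul_add, ih]
    rcases le_or_gt t m with h | h
    · have h1 : m + 1 - t = (m - t) + 1 := by omega
      rw [h1]
      rcases Nat.exists_eq_add_of_le h with ⟨q, rfl⟩
      simp only [Nat.add_sub_cancel_left]
      cases q with
      | zero => simp
      | succ s => simp only [Nat.add_sub_cancel]; ring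
    · have h1 : m + 1 - t = 0 ∨ (m + 1 - t = 1 ∧ m - t = 0) := by omega
      rcases h1 with h1 | ⟨h1, h2⟩ <;> simp [h1] <;> omega

lemma gauss2 (u : ℕ) : ∀ m : ℕ, 2 * ∑ c ∈ range m, (u - c) = u * (u + 1) - (u - m) * (u - m + 1) := by
  intro m
  induction m with
  | zero => simp
  | succ m ih =>
    rw [sum_range_succ, Nat.mul_add, ih]
    rcases le_or_gt m u with h | h
    · rcases Nat.exists_eq_add_of_le h with ⟨q, rfl⟩
      simp only [Nat.add_sub_cancel_left]
      have h1 : m + q - (m + 1) = q - 1 := by omega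
      rw [h1]
      cases q with
      | zero => simp
      | succ s =>
        simp only [Nat.add_sub_cancel]
        have e1 : (s+1)*(s+1+1) ≤ (m+(s+1))*(m+(s+1)+1) := by nlinarith
        have e2 : (s+1)*(s+1+1) = s*(s+1) + 2*(s+1) := by ring
        omega
    · have h1 : u - m = 0 := by omega
      have h2 : u - (m+1) = 0 := by omega
      simp [h1, h2]

lemma zmodTwoNe (p : ℕ) [Fact p.Prime] (hp2 : p % 2 = 1) : (2 : ZMod p) ≠ 0 := by
  have : ((2 : ℕ) : ZMod p) ≠ 0 := by
    rw [Ne, ZMod.natCast_eq_zero_iff]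
    intro h
    have := Nat.le_of_dvd (by norm_num) h
    have hp := (Fact.out : p.Prime).two_le
    omega
  simpa using this

lemma memS (p m : ℕ) [NeZero p] (hm : m ≤ p) (x : ZMod p) :
    x ∈ (range m).image (Nat.cast : ℕ → ZMod p) ↔ x.val < m := by
  constructor
  · rintro hx
    simp only [mem_image, mem_range] at hx
    obtain ⟨a, ha, rfl⟩ := hx
    rwa [ZMod.val_cast_of_lt (lt_of_lt_of_le ha hm)]
  · intro hx
    simp only [mem_image, mem_range]
    exact ⟨x.val, hx, ZMod.natCast_rightInverse x⟩

lemma badzero (p m s : ℕ) [Fact p.Prime] (hp2 : p % 2 = 1) (hm : m ≤ p)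
    (hs1 : s % 2 = 1) (hs2 : 2*m ≤ s + p) (hs3 : s < p) :
    m ≤ (((s : ZMod p)) * (2 : ZMod p)⁻¹).val := by
  have h2 : (2 : ZMod p) ≠ 0 := zmodTwoNe p hp2
  set b := (s + p)/2 with hb
  have hb2 : 2 * b = s + p := by omega
  have hkey : ((s : ZMod p)) * (2 : ZMod p)⁻¹ = (b : ZMod p) := by
    have h1 : ((2*b : ℕ) : ZMod p) = ((s + p : ℕ) : ZMod p) := by rw [hb2]
    push_cast at h1
    rw [ZMod.natCast_self, add_zero] at h1
    field_simp
    linear_combination -h1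
  rw [hkey, ZMod.val_cast_of_lt (by omega : b < p)]
  omega


lemma sum_ind (p m : ℕ) [Fact p.Prime] (hm : m ≤ p) (g : ZMod p → ℝ) :
    ∑ n : ZMod p, ind p ((range m).image (Nat.cast : ℕ → ZMod p)) n * g n
      = ∑ a ∈ range m, g ((a : ℕ) : ZMod p) := by
  have hinj : ∀ x ∈ range m, ∀ y ∈ range m, (Nat.cast : ℕ → ZMod p) x = Nat.cast y → x = y := by
    intro x hx y hy hxy
    simp only [mem_range] at hx hy
    have := congrArg ZMod.val hxy
    rwa [ZMod.val_cast_of_lt (lt_of_lt_of_le hx hm),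
      ZMod.val_cast_of_lt (lt_of_lt_of_le hy hm)] at this
  rw [← Finset.sum_image (f := g) (g := (Nat.cast : ℕ → ZMod p)) hinj]
  simp only [ind, ite_mul, one_mul, zero_mul]
  rw [Finset.sum_ite_mem, Finset.univ_inter]

lemma lam_eq (p m : ℕ) [Fact p.Prime] (hp2 : p % 2 = 1) (hm : m ≤ p) :
    Lam p (ind p ((range m).image (Nat.cast : ℕ → ZMod p)))
      = ((p:ℝ)^2)⁻¹ * ∑ a ∈ range m, ∑ c ∈ range m,
          ind p ((range m).image (Nat.cast : ℕ → ZMod p))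
            (((a + c : ℕ) : ZMod p) * (2 : ZMod p)⁻¹) := by
  have h2 : (2 : ZMod p) ≠ 0 := zmodTwoNe p hp2
  set S := (range m).image (Nat.cast : ℕ → ZMod p) with hS
  set f := ind p S with hf
  unfold Lam
  congr 1
  have step1 : ∀ n : ZMod p, ∑ d : ZMod p, f n * f (n + d) * f (n + 2 * d)
      = f n * ∑ c : ZMod p, f c * f ((n + c) * (2 : ZMod p)⁻¹) := by
    intro n
    rw [Finset.mul_sum]
    have hbij : Function.Bijective (fun d : ZMod p => n + 2 * d) := by
      rw [← Finite.injective_iff_bijective]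
      intro x y hxy
      exact mul_left_cancel₀ h2 (add_left_cancel hxy)
    refine Fintype.sum_bijective _ hbij _ _ ?_
    intro d
    have : (n + (n + 2 * d)) * (2 : ZMod p)⁻¹ = n + d := by
      field_simp
      ring
    rw [this]
    ring
  calc ∑ n : ZMod p, ∑ d : ZMod p, f n * f (n + d) * f (n + 2 * d)
      = ∑ n : ZMod p, f n * ∑ c : ZMod p, f c * f ((n + c) * (2 : ZMod p)⁻¹) := by
        exact Finset.sum_congr rfl (fun n _ => step1 n)
    _ = ∑ a ∈ range m, ∑ c : ZMod p, f c * f (((a : ℕ) + c) * (2 : ZMod p)⁻¹) := by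
        exact sum_ind p m hm _
    _ = ∑ a ∈ range m, ∑ c ∈ range m, f (((a + c : ℕ) : ZMod p) * (2 : ZMod p)⁻¹) := by
        refine Finset.sum_congr rfl (fun a _ => ?_)
        rw [sum_ind p m hm (fun c => f (((a : ℕ) + c) * (2 : ZMod p)⁻¹))]
        refine Finset.sum_congr rfl (fun c _ => ?_)
        push_cast
        ring_nf

def lo (p m c : ℕ) : ℕ := 2*m - p - c
def hi (p m c : ℕ) : ℕ := min m (p - c)
def a0 (p m c : ℕ) : ℕ := if (lo p m c + c) % 2 = 1 then lo p m c else lo p m c + 1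
def kk (p m c : ℕ) : ℕ := (hi p m c - a0 p m c + 1) / 2

lemma perc (p m : ℕ) [Fact p.Prime] (hp2 : p % 2 = 1) (hm : m ≤ p) (c : ℕ) (hc : c < m) :
    ∑ a ∈ range m,
        ind p ((range m).image (Nat.cast : ℕ → ZMod p)) (((a + c : ℕ) : ZMod p) * (2 : ZMod p)⁻¹)
      ≤ (m : ℝ) - (kk p m c : ℝ) := by
  set S := (range m).image (Nat.cast : ℕ → ZMod p) with hS
  set B := (range (kk p m c)).image (fun j => a0 p m c + 2*j) with hB
  have hmem : ∀ a ∈ B, a0 p m c ≤ a ∧ a < hi p m c ∧ (a + c) % 2 = (a0 p m c + c) % 2 := by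
    intro a ha
    simp only [hB, mem_image, mem_range] at ha
    obtain ⟨j, hj, rfl⟩ := ha
    refine ⟨by omega, ?_, by omega⟩
    simp only [kk] at hj
    omega
  have hBR : B ⊆ range m := by
    intro a ha
    have := hmem a ha
    have h2 : hi p m c ≤ m := by simp [hi]
    simp only [mem_range]
    omega
  have hcard : B.card = kk p m c := by
    rw [hB, Finset.card_image_of_injective _ ?_, card_range]
    intro x y h
    have h' : a0 p m c + 2*x = a0 p m c + 2*y := h
    omega
  have hkm : kk p m c ≤ m := by
    rw [← hcard]
    calc B.card ≤ (range m).card := Finset.card_le_card hBR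
    _ = m := card_range m
  have hzero : ∀ a ∈ B, ind p S (((a + c : ℕ) : ZMod p) * (2 : ZMod p)⁻¹) = 0 := by
    intro a ha
    obtain ⟨h1, h2, h3⟩ := hmem a ha
    have hhi : hi p m c ≤ p - c := by simp [hi]
    have hpar : (a0 p m c + c) % 2 = 1 := by
      simp only [a0, lo]
      by_cases hq : (2 * m - p - c + c) % 2 = 1 <;> simp only [hq, ↓reduceIte] <;> omega
    have hlo : 2*m ≤ (a + c) + p := by
      have hx : 2*m - p - c ≤ a0 p m c := by simp only [a0, lo]; by_cases hq : (2 * m - p - c + c) % 2 = 1 <;> simp only [hq, ↓reduceIte] <;> omega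
      omega
    have hac : a + c < p := by omega
    have hv := badzero p m (a + c) hp2 hm (by omega) hlo hac
    have hns : (((a + c : ℕ) : ZMod p) * (2 : ZMod p)⁻¹) ∉ S := by
      rw [hS, memS p m hm]
      omega
    have hns' : ((a : ZMod p) + (c : ZMod p)) * (2 : ZMod p)⁻¹ ∉ S := by
      push_cast at hns
      exact hns
    simp [ind, hns, hns']
  have hsplit := Finset.sum_sdiff (f := fun a =>
      ind p S (((a + c : ℕ) : ZMod p) * (2 : ZMod p)⁻¹)) hBR
  rw [← hsplit, Finset.sum_eq_zero hzero, add_zero]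
  have hle := Finset.sum_le_card_nsmul (range m \ B)
      (fun a => ind p S (((a + c : ℕ) : ZMod p) * (2 : ZMod p)⁻¹)) 1
      (by intro a _; simp only [ind]; split <;> norm_num)
  simp only [nsmul_eq_mul, mul_one] at hle
  rw [Finset.card_sdiff_of_subset hBR, card_range, hcard] at hle
  calc _ ≤ (((m - kk p m c : ℕ) : ℝ)) := hle
    _ = (m : ℝ) - (kk p m c : ℝ) := by
        rw [Nat.cast_sub hkm]

lemma total (p m : ℕ) [Fact p.Prime] (hp2 : p % 2 = 1) (hm : m ≤ p) (hm2 : p < 2*m) :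
    2*(m:ℤ)*m - 2*(2*(m:ℤ)-p)^2 - 2*m ≤ 4 * ∑ c ∈ range m, (kk p m c : ℤ) := by
  set t := p - m with ht
  set u := 2*m - p with hu
  have hu1 : 1 ≤ u := by omega
  have hum : u ≤ m := by omega
  -- pointwise: hi ≤ 2*kk + 1 + lo
  have hpt : ∀ c, hi p m c ≤ 2 * kk p m c + 1 + lo p m c := by
    intro c
    have ha0 : a0 p m c ≤ lo p m c + 1 := by simp only [a0]; split <;> omega
    simp only [kk]
    omega
  -- pointwise: (hi c : ℤ) = m - ((c - t : ℕ) : ℤ)  for c < m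
  have hhi : ∀ c ∈ range m, (hi p m c : ℤ) = (m : ℤ) - ((c - t : ℕ) : ℤ) := by
    intro c hc
    simp only [mem_range] at hc
    simp only [hi, ht]
    omega
  have hlo : ∀ c, lo p m c = u - c := by intro c; simp only [lo, hu]
  have hg1 : 2 * ∑ c ∈ range m, (c - t) = u * (u - 1) := by
    rw [gauss1 t m]
    have e : m - t = u := by omega
    rw [e]
  have hg2 : 2 * ∑ c ∈ range m, lo p m c = u * (u + 1) := by
    have : ∑ c ∈ range m, lo p m c = ∑ c ∈ range m, (u - c) :=
      Finset.sum_congr rfl (fun c _ => hlo c)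
    rw [this, gauss2 u m]
    have : u - m = 0 := by omega
    simp [this]
  have hsum : ∑ c ∈ range m, (hi p m c : ℤ)
      ≤ 2 * ∑ c ∈ range m, (kk p m c : ℤ) + m + ∑ c ∈ range m, (lo p m c : ℤ) := by
    have := Finset.sum_le_sum (s := range m)
      (f := fun c => (hi p m c : ℤ)) (g := fun c => 2 * (kk p m c : ℤ) + 1 + (lo p m c : ℤ))
      (by intro c _; exact_mod_cast Nat.cast_le.mpr (hpt c))
    simp only [Finset.sum_add_distrib, Finset.sum_const, card_range, nsmul_eq_mul, mul_one,
      ← Finset.mul_sum] at this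
    linarith
  have hsum2 : ∑ c ∈ range m, (hi p m c : ℤ) = (m:ℤ)*m - ∑ c ∈ range m, ((c - t : ℕ) : ℤ) := by
    rw [Finset.sum_congr rfl hhi, Finset.sum_sub_distrib, Finset.sum_const, card_range,
      nsmul_eq_mul]
  have hc1 : 2 * ∑ c ∈ range m, ((c - t : ℕ) : ℤ) = (u:ℤ) * ((u:ℤ) - 1) := by
    have := congrArg (Nat.cast : ℕ → ℤ) hg1
    push_cast at this
    rw [this]
    have : ((u - 1 : ℕ) : ℤ) = (u:ℤ) - 1 := by omega
    rw [this]
  have hc2 : 2 * ∑ c ∈ range m, ((lo p m c : ℕ) : ℤ) = (u:ℤ) * ((u:ℤ) + 1) := by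
    have := congrArg (Nat.cast : ℕ → ℤ) hg2
    push_cast at this
    rw [this]
  have huZ : (u : ℤ) = 2*(m:ℤ) - p := by omega
  nlinarith [hsum, hsum2, hc1, hc2]

lemma lam_le_one (p : ℕ) [Fact p.Prime] (S : Finset (ZMod p)) : Lam p (ind p S) ≤ 1 := by
  have hp : (0:ℝ) < p := by
    have := (Fact.out : p.Prime).two_le
    exact_mod_cast by omega
  unfold Lam
  have hterm : ∀ n d : ZMod p, ind p S n * ind p S (n + d) * ind p S (n + 2*d) ≤ 1 := by
    intro n d
    simp only [ind]
    split_ifs <;> norm_num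
  have hsum : ∑ n : ZMod p, ∑ d : ZMod p, ind p S n * ind p S (n + d) * ind p S (n + 2*d)
      ≤ ∑ _n : ZMod p, ∑ _d : ZMod p, (1:ℝ) := by
    apply Finset.sum_le_sum
    intro n _
    apply Finset.sum_le_sum
    intro d _
    exact hterm n d
  have hval : ∑ _n : ZMod p, ∑ _d : ZMod p, (1:ℝ) = (p:ℝ)^2 := by
    simp [Finset.sum_const, ZMod.card]
    ring
  calc ((p : ℝ) ^ 2)⁻¹ * ∑ n : ZMod p, ∑ d : ZMod p,
        ind p S n * ind p S (n + d) * ind p S (n + 2 * d)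
      ≤ ((p : ℝ) ^ 2)⁻¹ * (p:ℝ)^2 := by
        apply mul_le_mul_of_nonneg_left _ (by positivity)
        rw [← hval]
        exact hsum
    _ = 1 := by field_simp

lemma hpoly_lemma (α : ℝ) (h1 : 2/3 < α) (h2 : α ≤ 1) :
    (α^2 + (2*α-1)^2)/2 ≤ α^3*(1-(1-α)^2/2) := by
  have hkey : α^3*(1-(1-α)^2/2) - (α^2+(2*α-1)^2)/2 = (1-α)^3*(α^2+α-1)/2 := by ring
  have h1a : (0:ℝ) ≤ 1 - α := by linarith
  have h2a : (0:ℝ) ≤ α^2 + α - 1 := by nlinarith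
  nlinarith [mul_nonneg (pow_nonneg h1a 3) h2a]

set_option maxHeartbeats 2000000 in
theorem stmt_8 :
    ∃ C : ℝ, 0 < C ∧
      ∀ (p : ℕ) [Fact p.Prime],
        ∀ α : ℝ, 2/3 < α → α ≤ 1 →
          ∃ S : Finset (ZMod p), S.card = ⌊α * p⌋₊ ∧
            Lam p (ind p S) ≤ α ^ 3 * (1 - (1 - α) ^ 2 / 2) + C / p := by
  refine ⟨7, by norm_num, ?_⟩
  intro p hp α hα1 hα2
  have hp2 := hp.out.two_le
  have hppos : (0:ℝ) < p := by exact_mod_cast by omega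
  have hα0 : (0:ℝ) < α := by linarith
  have hαp : α * p ≤ p := by nlinarith
  have hmp : ⌊α * p⌋₊ ≤ p := by
    calc ⌊α * p⌋₊ ≤ ⌊(p:ℝ)⌋₊ := Nat.floor_le_floor hαp
      _ = p := Nat.floor_natCast p
  have htarget : 0 ≤ α ^ 3 * (1 - (1 - α) ^ 2 / 2) := by
    have h1a : (0:ℝ) ≤ 1 - α := by linarith
    have h1b : (1 - α)^2 ≤ 1 := by nlinarith
    have h1c : (0:ℝ) ≤ α^3 := by positivity
    nlinarith
  by_cases hbig : 7 ≤ p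
  · -- main case
    have hp2' : p % 2 = 1 := by
      rcases hp.out.eq_two_or_odd with h | h <;> omega
    set m := ⌊α * p⌋₊ with hmdef
    have hm : m ≤ p := hmp
    have hmub : (m : ℝ) ≤ α * p := Nat.floor_le (by positivity)
    have hmlb : α * p < (m : ℝ) + 1 := Nat.lt_floor_add_one _
    have h2p : (2*p : ℝ) < 3*(m:ℝ) + 3 := by nlinarith
    have h2pn : 2*p < 3*m + 3 := by exact_mod_cast h2p
    have hm2 : p < 2*m := by omega
    set S := (range m).image (Nat.cast : ℕ → ZMod p) with hSdef
    have hinj : Set.InjOn (Nat.cast : ℕ → ZMod p) (range m) := by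
      intro x hx y hy hxy
      simp only [coe_range, Set.mem_Iio] at hx hy
      have := congrArg ZMod.val hxy
      rwa [ZMod.val_cast_of_lt (lt_of_lt_of_le hx hm),
        ZMod.val_cast_of_lt (lt_of_lt_of_le hy hm)] at this
    refine ⟨S, by rw [hSdef, Finset.card_image_of_injOn hinj, card_range], ?_⟩
    rw [lam_eq p m hp2' hm]
    set Kn : ℕ := ∑ c ∈ range m, kk p m c with hKdef
    have hinner : ∀ a ∈ range m, ∑ c ∈ range m,
        ind p S (((a + c : ℕ) : ZMod p) * (2 : ZMod p)⁻¹) ≤ (m : ℝ) - (kk p m a : ℝ) := by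
      intro a ha
      simp only [mem_range] at ha
      have := perc p m hp2' hm a ha
      calc ∑ c ∈ range m, ind p S (((a + c : ℕ) : ZMod p) * (2 : ZMod p)⁻¹)
          = ∑ c ∈ range m, ind p S (((c + a : ℕ) : ZMod p) * (2 : ZMod p)⁻¹) := by
            refine Finset.sum_congr rfl (fun c _ => ?_)
            rw [Nat.add_comm]
        _ ≤ (m : ℝ) - (kk p m a : ℝ) := this
    have hT : ∑ a ∈ range m, ∑ c ∈ range m,
        ind p S (((a + c : ℕ) : ZMod p) * (2 : ZMod p)⁻¹)
        ≤ (m:ℝ)*(m:ℝ) - (Kn:ℝ) := by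
      calc ∑ a ∈ range m, ∑ c ∈ range m, ind p S (((a + c : ℕ) : ZMod p) * (2 : ZMod p)⁻¹)
          ≤ ∑ a ∈ range m, ((m : ℝ) - (kk p m a : ℝ)) := Finset.sum_le_sum hinner
        _ = (m:ℝ)*(m:ℝ) - (Kn:ℝ) := by
            rw [Finset.sum_sub_distrib, Finset.sum_const, card_range, nsmul_eq_mul, hKdef]
            push_cast
            ring
    have htot := total p m hp2' hm hm2
    have hKZ : ∑ c ∈ range m, (kk p m c : ℤ) = (Kn : ℤ) := by
      rw [hKdef]
      push_cast
      rfl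
    rw [hKZ] at htot
    have htotR : 2*(m:ℝ)*(m:ℝ) - 2*(2*(m:ℝ)-(p:ℝ))^2 - 2*(m:ℝ) ≤ 4 * (Kn:ℝ) := by
      exact_mod_cast htot
    clear_value Kn
    -- numeric finish
    have hP7 : (7:ℝ) ≤ p := by exact_mod_cast hbig
    have hU0 : (0:ℝ) ≤ 2*(m:ℝ) - p := by
      have : (p:ℝ) < 2*m := by exact_mod_cast hm2
      linarith
    have e1 : (m:ℝ)*(m:ℝ) ≤ α^2*(p:ℝ)^2 := by nlinarith
    have e2 : (2*(m:ℝ)-(p:ℝ))^2 ≤ (2*α-1)^2*(p:ℝ)^2 := by nlinarith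
    have hmain : (m:ℝ)*(m:ℝ) - (Kn:ℝ)
        ≤ ((α^2 + (2*α-1)^2)/2)*(p:ℝ)^2 + (p:ℝ)/2 := by
      have hmP : (m:ℝ) ≤ (p:ℝ) := by exact_mod_cast hm
      linarith [htotR, e1, e2]
    have hP2 : (0:ℝ) < (p:ℝ)^2 := by positivity
    have hLam : ((p:ℝ)^2)⁻¹ * ∑ a ∈ range m, ∑ c ∈ range m,
        ind p S (((a + c : ℕ) : ZMod p) * (2 : ZMod p)⁻¹)
        ≤ (α^2 + (2*α-1)^2)/2 + 1/(2*(p:ℝ)) := by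
      calc ((p:ℝ)^2)⁻¹ * ∑ a ∈ range m, ∑ c ∈ range m,
            ind p S (((a + c : ℕ) : ZMod p) * (2 : ZMod p)⁻¹)
          ≤ ((p:ℝ)^2)⁻¹ * (((α^2 + (2*α-1)^2)/2)*(p:ℝ)^2 + (p:ℝ)/2) := by
            apply mul_le_mul_of_nonneg_left (le_trans hT hmain) (by positivity)
        _ = (α^2 + (2*α-1)^2)/2 + 1/(2*(p:ℝ)) := by
            field_simp
    refine le_trans hLam ?_
    clear hLam hT hinner
    have hpoly := hpoly_lemma α hα1 hα2
    have hfrac : 1/(2*(p:ℝ)) ≤ 7/(p:ℝ) := by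
      rw [div_le_div_iff₀ (by linarith : (0:ℝ) < 2*(p:ℝ)) (by linarith : (0:ℝ) < (p:ℝ))]
      nlinarith
    linarith
  · -- small p
    have hcard : ⌊α * p⌋₊ ≤ (Finset.univ : Finset (ZMod p)).card := by
      rw [Finset.card_univ, ZMod.card]
      exact hmp
    obtain ⟨S, _, hS2⟩ := Finset.exists_subset_card_eq hcard
    refine ⟨S, hS2, ?_⟩
    have h1 := lam_le_one p S
    have hple : (p:ℝ) ≤ 6 := by exact_mod_cast by omega
    have : (1:ℝ) ≤ 7 / p := by
      rw [le_div_iff₀ hppos]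
      linarith
    linarith
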